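/- Let n ≥ 2, μ_1,…,μ_n ∈ ℝ, σ_1,…,σ_n > 0, and let X_1,…,X_n be independent random variables with X_i ~ N(μ_i, σ_i²). For x > 1 set a_x := x^{1/n}/log x, and define I_2(x) := P( ∏_{j=1}^n X_j ≥ x and |X_i| ≤ a_x for some i ) and I_1(x) := P( ∏_{j=1}^n X_j ≥ x and |X_i| > a_x for all i ). Then I_1(x) > 0 for all sufficiently large x, and I_2(x)/I_1(x) → 0 as x → ∞. -/

import Mathlib

open MeasureTheory ProbabilityTheory Finset Filter
open scoped Topology


open MeasureTheory ProbabilityTheory Filter Real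
open scoped Topology ENNReal NNReal

namespace GaussAux

lemma pdf_shift (m : ℝ) {v : ℝ≥0} (hv : v ≠ 0) (l y : ℝ) :
    Real.exp (l * y) * gaussianPDFReal m v y
      = Real.exp (l * m + v * l ^ 2 / 2) * gaussianPDFReal (m + v * l) v y := by
  have hv' : (0:ℝ) < v := lt_of_le_of_ne v.coe_nonneg (by exact_mod_cast hv.symm)
  unfold gaussianPDFReal
  rw [mul_left_comm, mul_left_comm (Real.exp _), ← Real.exp_add, ← Real.exp_add]
  congr 2
  field_simp
  ring

lemma integrable_exp_gaussianReal (m : ℝ) {v : ℝ≥0} (hv : v ≠ 0) (l : ℝ) :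
    Integrable (fun y => Real.exp (l * y)) (gaussianReal m v) := by
  rw [gaussianReal_of_var_ne_zero _ hv]
  have hmeas : Measurable fun y => (gaussianPDFReal m v y).toNNReal :=
    (measurable_gaussianPDFReal m v).real_toNNReal
  rw [show (gaussianPDF m v) = (fun y => ((gaussianPDFReal m v y).toNNReal : ℝ≥0∞)) from rfl]
  rw [integrable_withDensity_iff_integrable_coe_smul hmeas]
  refine ((integrable_gaussianPDFReal (m + v * l) v).const_mul
    (Real.exp (l * m + v * l ^ 2 / 2))).congr ?_
  filter_upwards with y
  rw [smul_eq_mul, Real.coe_toNNReal _ (gaussianPDFReal_nonneg _ _ _)]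
  linear_combination (-1 : ℝ) * pdf_shift m hv l y

lemma integral_exp_gaussianReal (m : ℝ) {v : ℝ≥0} (hv : v ≠ 0) (l : ℝ) :
    ∫ y, Real.exp (l * y) ∂(gaussianReal m v) = Real.exp (l * m + v * l ^ 2 / 2) := by
  rw [gaussianReal_of_var_ne_zero _ hv]
  have hmeas : Measurable fun y => (gaussianPDFReal m v y).toNNReal :=
    (measurable_gaussianPDFReal m v).real_toNNReal
  rw [show (gaussianPDF m v) = (fun y => ((gaussianPDFReal m v y).toNNReal : ℝ≥0∞)) from rfl]
  rw [integral_withDensity_eq_integral_smul hmeas]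
  have : ∀ y, (gaussianPDFReal m v y).toNNReal • Real.exp (l * y)
      = Real.exp (l * m + v * l ^ 2 / 2) * gaussianPDFReal (m + v * l) v y := by
    intro y
    rw [NNReal.smul_def, smul_eq_mul, Real.coe_toNNReal _ (gaussianPDFReal_nonneg _ _ _),
      mul_comm, pdf_shift m hv l y]
  simp_rw [this]
  rw [integral_const_mul, integral_gaussianPDFReal_eq_one _ hv, mul_one]

lemma tail_upper (m s : ℝ) {v : ℝ≥0} (hv : v ≠ 0) (hs : m ≤ s) :
    (gaussianReal m v {y | s ≤ y}).toReal ≤ Real.exp (-(s - m) ^ 2 / (2 * v)) := by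
  have hv' : (0:ℝ) < v := lt_of_le_of_ne v.coe_nonneg (by exact_mod_cast hv.symm)
  set l : ℝ := (s - m) / v with hl_def
  have hl : 0 ≤ l := div_nonneg (by linarith) v.coe_nonneg
  have h := measure_ge_le_exp_mul_mgf (X := id) (μ := gaussianReal m v) s hl
    (by simpa using integrable_exp_gaussianReal m hv l)
  simp only [id] at h
  rw [mgf] at h
  simp only [id] at h
  rw [integral_exp_gaussianReal m hv l] at h
  refine h.trans_eq ?_
  rw [← Real.exp_add]
  congr 1
  rw [hl_def]
  field_simp
  ring

lemma tail_lower (m s : ℝ) {v : ℝ≥0} (hv : v ≠ 0) (hs : m ≤ s) :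
    gaussianPDFReal m v (s + 1) ≤ (gaussianReal m v {y | s ≤ y}).toReal := by
  have h1 : gaussianReal m v (Set.Icc s (s + 1)) ≤ gaussianReal m v {y | s ≤ y} :=
    measure_mono fun y hy => hy.1
  rw [gaussianReal_apply_eq_integral _ hv] at h1
  have h2 : gaussianPDFReal m v (s + 1) ≤ ∫ y in Set.Icc s (s + 1), gaussianPDFReal m v y := by
    have hconst : ∫ _ in Set.Icc s (s + 1), gaussianPDFReal m v (s + 1)
        = gaussianPDFReal m v (s + 1) := by
      rw [setIntegral_const]
      simp [Real.volume_Icc]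
    rw [← hconst]
    refine setIntegral_mono_on ((integrableOn_const_iff (C := gaussianPDFReal m v (s + 1))).mpr ?_)
      ((integrable_gaussianPDFReal _ _).integrableOn) measurableSet_Icc ?_
    · right; rw [Real.volume_Icc]; simp
    · intro y hy
      unfold gaussianPDFReal
      have hsq : (y - m) ^ 2 ≤ (s + 1 - m) ^ 2 := by
        have h1' := hy.1; have h2' := hy.2
        simp only [Set.mem_Icc] at hy
        nlinarith [hy.1, hy.2]
      have h2v : (0:ℝ) < 2 * v := by positivity
      refine mul_le_mul_of_nonneg_left (Real.exp_le_exp.mpr ?_) (by positivity)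
      exact div_le_div_of_nonneg_right (by linarith) h2v.le
  calc gaussianPDFReal m v (s + 1) ≤ ∫ y in Set.Icc s (s + 1), gaussianPDFReal m v y := h2
    _ = (ENNReal.ofReal (∫ y in Set.Icc s (s + 1), gaussianPDFReal m v y)).toReal := by
        rw [ENNReal.toReal_ofReal]
        exact le_trans (gaussianPDFReal_nonneg _ _ _) h2
    _ ≤ (gaussianReal m v {y | s ≤ y}).toReal :=
        ENNReal.toReal_mono (measure_ne_top _ _) h1

lemma tail_pos (m s : ℝ) {v : ℝ≥0} (hv : v ≠ 0) :
    0 < gaussianReal m v {y | s ≤ y} := by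
  set s' := max s m with hs'
  have h0 : 0 < (gaussianReal m v {y | s' ≤ y}).toReal :=
    lt_of_lt_of_le (gaussianPDFReal_pos _ _ _ hv) (tail_lower m s' hv (le_max_right _ _))
  have h1 : 0 < gaussianReal m v {y | s' ≤ y} := by
    by_contra h
    push_neg at h
    rw [le_zero_iff.mp h] at h0
    simp at h0
  exact h1.trans_le (measure_mono fun y (hy : s' ≤ y) => show s ≤ y from le_trans (le_max_left _ _) hy)

lemma neg_tail (m s : ℝ) {v : ℝ≥0} (hv : v ≠ 0) :
    gaussianReal m v {y | y ≤ -s} = gaussianReal (-m) v {y | s ≤ y} := by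
  have hmap := gaussianReal_map_const_mul (μ := m) (v := v) (-1)
  have hvar : (NNReal.mk ((-1:ℝ) ^ 2) (sq_nonneg _)) = 1 := NNReal.coe_injective (show ((-1:ℝ) ^ 2) = ((1:ℝ≥0):ℝ) by norm_num)
  rw [hvar, one_mul, show (-1:ℝ) * m = -m from by ring] at hmap
  have hmeas : MeasurableSet {y : ℝ | s ≤ y} := measurableSet_Ici
  have := congrArg (fun ν : Measure ℝ => ν {y | s ≤ y}) hmap
  have hmble : Measurable fun x : ℝ => -1 * x := by fun_prop
  rw [Measure.map_apply hmble hmeas] at this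
  rw [← this]
  congr 1
  ext y
  simp only [Set.mem_preimage, Set.mem_setOf_eq, neg_mul, one_mul]
  constructor <;> intro <;> linarith

lemma abs_tail (m s : ℝ) {v : ℝ≥0} (hv : v ≠ 0) (hs : |m| ≤ s) :
    (gaussianReal m v {y | s ≤ |y|}).toReal
      ≤ 2 * Real.exp (-(s - |m|) ^ 2 / (2 * v)) := by
  have hv' : (0:ℝ) < v := lt_of_le_of_ne v.coe_nonneg (by exact_mod_cast hv.symm)
  have hsub : {y : ℝ | s ≤ |y|} ⊆ {y | s ≤ y} ∪ {y | y ≤ -s} := by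
    intro y hy
    rcases abs_cases y with ⟨h1, _⟩ | ⟨h1, _⟩
    · left; simp only [Set.mem_setOf_eq] at *; linarith [hy]
    · right; simp only [Set.mem_setOf_eq] at *; linarith [hy]
  have h1 : gaussianReal m v {y | s ≤ |y|}
      ≤ gaussianReal m v {y | s ≤ y} + gaussianReal m v {y | y ≤ -s} :=
    (measure_mono hsub).trans (measure_union_le _ _)
  have hne1 : gaussianReal m v {y | s ≤ y} ≠ ⊤ := measure_ne_top _ _
  have hne2 : gaussianReal m v {y | y ≤ -s} ≠ ⊤ := measure_ne_top _ _
  have h2 : (gaussianReal m v {y | s ≤ |y|}).toReal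
      ≤ (gaussianReal m v {y | s ≤ y}).toReal + (gaussianReal m v {y | y ≤ -s}).toReal := by
    rw [← ENNReal.toReal_add hne1 hne2]
    exact ENNReal.toReal_mono (by finiteness) h1
  have habs : 0 ≤ s - |m| := by linarith
  have hA : (gaussianReal m v {y | s ≤ y}).toReal ≤ Real.exp (-(s - |m|) ^ 2 / (2 * v)) := by
    refine (tail_upper m s hv (le_trans (le_abs_self m) hs)).trans ?_
    apply Real.exp_le_exp.mpr
    have h2v : (0:ℝ) < 2 * v := by positivity
    have : (s - |m|) ^ 2 ≤ (s - m) ^ 2 := by nlinarith [le_abs_self m, abs_nonneg m]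
    exact div_le_div_of_nonneg_right (by linarith) h2v.le
  have hB : (gaussianReal m v {y | y ≤ -s}).toReal ≤ Real.exp (-(s - |m|) ^ 2 / (2 * v)) := by
    rw [neg_tail m s hv]
    refine (tail_upper (-m) s hv (le_trans (neg_le_abs m) hs)).trans ?_
    apply Real.exp_le_exp.mpr
    have h2v : (0:ℝ) < 2 * v := by positivity
    have : (s - |m|) ^ 2 ≤ (s - -m) ^ 2 := by nlinarith [neg_le_abs m, abs_nonneg m]
    exact div_le_div_of_nonneg_right (by linarith) h2v.le
  linarith

end GaussAux

set_option maxHeartbeats 2000000 in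
/-- The unbalanced part of the tail is negligible: the balanced probability `I₁(x)` is
eventually positive and `I₂(x)/I₁(x) → 0` as `x → ∞`. -/
theorem unbalanced_over_balanced_tendsto_zero
    {Ω : Type*} [MeasureSpace Ω] [IsProbabilityMeasure (ℙ : Measure Ω)]
    (n : ℕ) (hn : 2 ≤ n) (μ σ : Fin n → ℝ) (hσ : ∀ i, 0 < σ i)
    (X : Fin n → Ω → ℝ)
    (hindep : iIndepFun X ℙ)
    (hlaw : ∀ i, Measure.map (X i) ℙ = gaussianReal (μ i) (Real.toNNReal (σ i ^ 2))) :
    (∃ x₀ : ℝ, ∀ x ≥ x₀,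
      0 < (ℙ {ω | x ≤ ∏ j, X j ω ∧
            ∀ i, x ^ ((1 : ℝ) / n) / Real.log x < |X i ω|}).toReal)
    ∧ Tendsto (fun x : ℝ =>
        (ℙ {ω | x ≤ ∏ j, X j ω ∧
            ∃ i, |X i ω| ≤ x ^ ((1 : ℝ) / n) / Real.log x}).toReal /
        (ℙ {ω | x ≤ ∏ j, X j ω ∧
            ∀ i, x ^ ((1 : ℝ) / n) / Real.log x < |X i ω|}).toReal)
      atTop (𝓝 0) := by
  classical
  have hnR : (2:ℝ) ≤ (n:ℝ) := by exact_mod_cast hn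
  have hn0 : (n:ℝ) ≠ 0 := by positivity
  set v : Fin n → ℝ≥0 := fun i => Real.toNNReal (σ i ^ 2) with hv_def
  have hv_coe : ∀ i, ((v i) : ℝ) = σ i ^ 2 := fun i => Real.coe_toNNReal _ (sq_nonneg _)
  have hv_pos : ∀ i, (0:ℝ) < (v i : ℝ) := fun i => by rw [hv_coe]; exact pow_pos (hσ i) 2
  have hv_ne : ∀ i, v i ≠ 0 := by
    intro i h
    have := hv_pos i
    rw [h] at this
    simp at this
  have hXm : ∀ i, AEMeasurable (X i) ℙ := fun i =>
    aemeasurable_of_map_neZero (by rw [hlaw i]; infer_instance)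
  have hmap : ∀ (i : Fin n) (S : Set ℝ), MeasurableSet S →
      ℙ (X i ⁻¹' S) = gaussianReal (μ i) (v i) S := by
    intro i S hS
    rw [← hlaw i, Measure.map_apply_of_aemeasurable (hXm i) hS]
  -- the key lower bound on the balanced probability
  have hI1 : ∀ x : ℝ, Real.exp 2 ≤ x → (∀ i, μ i ≤ x ^ ((1 : ℝ) / n)) →
      (∏ i, gaussianPDFReal (μ i) (v i) (x ^ ((1 : ℝ) / n) + 1))
        ≤ (ℙ {ω | x ≤ ∏ j, X j ω ∧
            ∀ i, x ^ ((1 : ℝ) / n) / Real.log x < |X i ω|}).toReal := by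
    intro x hx hmu
    have hlogx : (2:ℝ) ≤ Real.log x := by
      rw [← Real.log_exp 2]
      exact Real.log_le_log (Real.exp_pos 2) hx
    have hx0 : (0:ℝ) < x := lt_of_lt_of_le (Real.exp_pos 2) hx
    have hT0 : (0:ℝ) < x ^ ((1 : ℝ) / n) := Real.rpow_pos_of_pos hx0 _
    have hTn : (x ^ ((1 : ℝ) / n)) ^ n = x := by
      rw [← Real.rpow_natCast (x ^ ((1 : ℝ) / n)) n, ← Real.rpow_mul hx0.le, one_div,
        inv_mul_cancel₀ hn0, Real.rpow_one]
    have hsub : (⋂ i, X i ⁻¹' {y | x ^ ((1 : ℝ) / n) ≤ y})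
        ⊆ {ω | x ≤ ∏ j, X j ω ∧ ∀ i, x ^ ((1 : ℝ) / n) / Real.log x < |X i ω|} := by
      intro ω hω
      simp only [Set.mem_iInter, Set.mem_preimage, Set.mem_setOf_eq] at hω ⊢
      refine ⟨?_, fun i => ?_⟩
      · calc x = (x ^ ((1 : ℝ) / n)) ^ n := hTn.symm
          _ = ∏ _j : Fin n, x ^ ((1 : ℝ) / n) := by
              rw [Finset.prod_const, Finset.card_univ, Fintype.card_fin]
          _ ≤ ∏ j, X j ω := Finset.prod_le_prod (fun _ _ => hT0.le) (fun j _ => hω j)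
      · exact lt_of_lt_of_le (div_lt_self hT0 (by linarith))
          ((hω i).trans (le_abs_self _))
    calc (∏ i, gaussianPDFReal (μ i) (v i) (x ^ ((1 : ℝ) / n) + 1))
        ≤ ∏ i, (gaussianReal (μ i) (v i) {y | x ^ ((1 : ℝ) / n) ≤ y}).toReal :=
          Finset.prod_le_prod (fun i _ => gaussianPDFReal_nonneg _ _ _)
            (fun i _ => GaussAux.tail_lower _ _ (hv_ne i) (hmu i))
      _ = (∏ i, gaussianReal (μ i) (v i) {y | x ^ ((1 : ℝ) / n) ≤ y}).toReal :=
          (ENNReal.toReal_prod _ _).symm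
      _ = (ℙ (⋂ i, X i ⁻¹' {y | x ^ ((1 : ℝ) / n) ≤ y})).toReal := by
          rw [hindep.meas_iInter (fun i => ⟨{y | x ^ ((1 : ℝ) / n) ≤ y}, measurableSet_Ici, rfl⟩)]
          congr 1
          exact Finset.prod_congr rfl fun i _ => (hmap i _ measurableSet_Ici).symm
      _ ≤ _ := ENNReal.toReal_mono (measure_ne_top _ _) (measure_mono hsub)
  set M : ℝ := ∑ j, |μ j| with hM_def
  have hM0 : 0 ≤ M := Finset.sum_nonneg fun j _ => abs_nonneg _
  have hMj : ∀ j, |μ j| ≤ M := fun j =>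
    Finset.single_le_sum (fun j _ => abs_nonneg (μ j)) (Finset.mem_univ j)
  constructor
  · -- Part 1: eventual positivity
    refine ⟨Real.exp 2 + (M + 1) ^ n, fun x hx => ?_⟩
    have hxe : Real.exp 2 ≤ x := by
      have : (0:ℝ) ≤ (M + 1) ^ n := by positivity
      linarith
    have hmu : ∀ i, μ i ≤ x ^ ((1 : ℝ) / n) := by
      intro i
      have hx0 : (0:ℝ) < x := lt_of_lt_of_le (Real.exp_pos 2) hxe
      have hle : (M + 1) ^ n ≤ x := by
        have := Real.exp_pos 2
        linarith
      have h1 : ((M + 1) ^ n : ℝ) ^ ((1 : ℝ) / n) ≤ x ^ ((1 : ℝ) / n) :=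
        Real.rpow_le_rpow (by positivity) hle (by positivity)
      rw [← Real.rpow_natCast (M + 1) n, ← Real.rpow_mul (by linarith), mul_one_div,
        div_self hn0, Real.rpow_one] at h1
      calc μ i ≤ |μ i| := le_abs_self _
        _ ≤ M := hMj i
        _ ≤ M + 1 := by linarith
        _ ≤ x ^ ((1 : ℝ) / n) := h1
    have hD0 : 0 < ∏ i, gaussianPDFReal (μ i) (v i) (x ^ ((1 : ℝ) / n) + 1) :=
      Finset.prod_pos fun i _ => gaussianPDFReal_pos _ _ _ (hv_ne i)
    exact lt_of_lt_of_le hD0 (hI1 x hxe hmu)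
  · -- Part 2: the ratio tends to 0
    set K : ℝ := ∑ j, 1 / (2 * (v j : ℝ)) with hK_def
    have hK0 : 0 ≤ K := Finset.sum_nonneg fun j _ => by positivity
    set C : ℝ := ∏ j, (Real.sqrt (2 * Real.pi * (v j : ℝ)))⁻¹ with hC_def
    have hC0 : 0 < C := Finset.prod_pos fun j _ => by
      have := hv_pos j
      have := Real.pi_pos
      positivity
    set AA : ℝ → ℝ := fun x => ∑ j, (x ^ ((1 : ℝ) / n) + 1 - μ j) ^ 2 / (2 * (v j : ℝ))
      with hAA_def
    set B : ℝ → ℝ := fun x => x ^ ((1 : ℝ) / n) * (Real.log x) ^ ((1 : ℝ) / ((n:ℝ) - 1))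
      with hB_def
    have hTtend : Tendsto (fun x : ℝ => x ^ ((1 : ℝ) / n)) atTop atTop :=
      tendsto_rpow_atTop (by positivity)
    have hltend : Tendsto (fun x : ℝ => (Real.log x) ^ ((1 : ℝ) / ((n:ℝ) - 1))) atTop atTop :=
      (tendsto_rpow_atTop (one_div_pos.mpr (by linarith : (0:ℝ) < (n:ℝ) - 1))).comp Real.tendsto_log_atTop
    have hBtend : Tendsto B atTop atTop := hTtend.atTop_mul_atTop₀ hltend
    apply squeeze_zero' (g := fun x => (∑ i, 2 * Real.exp (-(B x - |μ i|) ^ 2 / (2 * (v i : ℝ))))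
        / (∏ i, gaussianPDFReal (μ i) (v i) (x ^ ((1 : ℝ) / n) + 1)))
      (Eventually.of_forall fun x => div_nonneg ENNReal.toReal_nonneg ENNReal.toReal_nonneg)
    · -- eventual bound f ≤ g
      have hev1 : ∀ᶠ x : ℝ in atTop, Real.exp 2 ≤ x := eventually_ge_atTop _
      have hev2 : ∀ᶠ x : ℝ in atTop, ∀ i : Fin n, μ i ≤ x ^ ((1 : ℝ) / n) :=
        eventually_all.mpr fun i => hTtend.eventually_ge_atTop (μ i)
      have hev3 : ∀ᶠ x : ℝ in atTop, ∀ i : Fin n, |μ i| ≤ B x :=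
        eventually_all.mpr fun i => hBtend.eventually_ge_atTop (|μ i|)
      filter_upwards [hev1, hev2, hev3] with x hx hmu hBx
      have hlogx : (2:ℝ) ≤ Real.log x := by
        rw [← Real.log_exp 2]
        exact Real.log_le_log (Real.exp_pos 2) hx
      have hx0 : (0:ℝ) < x := lt_of_lt_of_le (Real.exp_pos 2) hx
      have hT0 : (0:ℝ) < x ^ ((1 : ℝ) / n) := Real.rpow_pos_of_pos hx0 _
      have hTn : (x ^ ((1 : ℝ) / n)) ^ n = x := by
        rw [← Real.rpow_natCast (x ^ ((1 : ℝ) / n)) n, ← Real.rpow_mul hx0.le, one_div,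
          inv_mul_cancel₀ hn0, Real.rpow_one]
      have hD0 : 0 < ∏ i, gaussianPDFReal (μ i) (v i) (x ^ ((1 : ℝ) / n) + 1) :=
        Finset.prod_pos fun i _ => gaussianPDFReal_pos _ _ _ (hv_ne i)
      refine div_le_div₀ (Finset.sum_nonneg fun i _ => by positivity) ?_ hD0 (hI1 x hx hmu)
      -- numerator bound
      have hsub2 : {ω | x ≤ ∏ j, X j ω ∧ ∃ i, |X i ω| ≤ x ^ ((1 : ℝ) / n) / Real.log x}
          ⊆ ⋃ i, X i ⁻¹' {y | B x ≤ |y|} := by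
        rintro ω ⟨hxle, i, hia⟩
        by_contra hcon
        simp only [Set.mem_iUnion, Set.mem_preimage, Set.mem_setOf_eq, not_exists,
          not_le] at hcon
        have hprodpos : 0 < ∏ j, X j ω := lt_of_lt_of_le hx0 hxle
        have hXne : ∀ j, X j ω ≠ 0 := by
          intro j hj
          rw [Finset.prod_eq_zero (Finset.mem_univ j) hj] at hprodpos
          exact lt_irrefl _ hprodpos
        have hApos : (0:ℝ) < x ^ ((1 : ℝ) / n) / Real.log x := div_pos hT0 (by linarith)
        have hkey : ∏ j, |X j ω| < (x ^ ((1 : ℝ) / n) / Real.log x) * B x ^ (n - 1) := by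
          rw [← Finset.mul_prod_erase Finset.univ _ (Finset.mem_univ i)]
          have hne : (Finset.univ.erase i).Nonempty := by
            apply Finset.card_pos.mp
            rw [Finset.card_erase_of_mem (Finset.mem_univ i), Finset.card_univ,
              Fintype.card_fin]
            omega
          have h1 : ∏ j ∈ Finset.univ.erase i, |X j ω| < B x ^ (n - 1) := by
            have h2 := Finset.prod_lt_prod_of_nonempty
              (f := fun j => |X j ω|) (g := fun _ => B x)
              (fun j _ => abs_pos.mpr (hXne j)) (fun j _ => hcon j) hne
            rwa [Finset.prod_const, Finset.card_erase_of_mem (Finset.mem_univ i),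
              Finset.card_univ, Fintype.card_fin] at h2
          exact mul_lt_mul' hia h1 (Finset.prod_nonneg fun j _ => abs_nonneg _) hApos
        have hABn : (x ^ ((1 : ℝ) / n) / Real.log x) * B x ^ (n - 1) = x := by
          have hln : ((Real.log x) ^ ((1 : ℝ) / ((n:ℝ) - 1))) ^ (n - 1) = Real.log x := by
            rw [← Real.rpow_natCast ((Real.log x) ^ ((1 : ℝ) / ((n:ℝ) - 1))) (n - 1),
              ← Real.rpow_mul (by linarith), Nat.cast_sub (by omega), Nat.cast_one,
              one_div, inv_mul_cancel₀ (by linarith : (n:ℝ) - 1 ≠ 0), Real.rpow_one]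
          have hL0 : Real.log x ≠ 0 := by linarith
          have hstep : x ^ ((1 : ℝ) / n) * (x ^ ((1 : ℝ) / n)) ^ (n - 1) = x := by
            rw [← pow_succ', show n - 1 + 1 = n from by omega, hTn]
          have hrear : x ^ ((1 : ℝ) / n) / Real.log x
                * ((x ^ ((1 : ℝ) / n)) ^ (n - 1) * Real.log x)
              = (x ^ ((1 : ℝ) / n) * (x ^ ((1 : ℝ) / n)) ^ (n - 1))
                * (Real.log x / Real.log x) := by ring
          rw [hB_def]
          simp only
          rw [mul_pow, hln, hrear, div_self hL0, mul_one, hstep]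
        have hfin : x < x := by
          calc x ≤ ∏ j, X j ω := hxle
            _ ≤ |∏ j, X j ω| := le_abs_self _
            _ = ∏ j, |X j ω| := Finset.abs_prod _ _
            _ < (x ^ ((1 : ℝ) / n) / Real.log x) * B x ^ (n - 1) := hkey
            _ = x := hABn
        exact lt_irrefl x hfin
      calc (ℙ {ω | x ≤ ∏ j, X j ω ∧ ∃ i, |X i ω| ≤ x ^ ((1 : ℝ) / n) / Real.log x}).toReal
          ≤ (∑ i, ℙ (X i ⁻¹' {y | B x ≤ |y|})).toReal := by
            refine ENNReal.toReal_mono ?_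
              ((measure_mono hsub2).trans (measure_iUnion_fintype_le _ _))
            exact (ENNReal.sum_lt_top.mpr fun i _ => measure_lt_top _ _).ne
        _ = ∑ i, (ℙ (X i ⁻¹' {y | B x ≤ |y|})).toReal :=
            ENNReal.toReal_sum fun i _ => measure_ne_top _ _
        _ ≤ ∑ i, 2 * Real.exp (-(B x - |μ i|) ^ 2 / (2 * (v i : ℝ))) := by
            refine Finset.sum_le_sum fun i _ => ?_
            rw [hmap i _ (measurableSet_le measurable_const measurable_abs)]
            exact GaussAux.abs_tail _ _ (hv_ne i) (hBx i)
    · -- the bound tends to zero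
      have hDC : ∀ x : ℝ, (∏ i, gaussianPDFReal (μ i) (v i) (x ^ ((1 : ℝ) / n) + 1))
          = C * Real.exp (-(AA x)) := by
        intro x
        unfold gaussianPDFReal
        rw [Finset.prod_mul_distrib, ← Real.exp_sum]
        have h1 : ∑ j, -(x ^ ((1 : ℝ) / n) + 1 - μ j) ^ 2 / (2 * ((v j) : ℝ)) = -(AA x) := by
          rw [hAA_def]
          simp only
          rw [← Finset.sum_neg_distrib]
          exact Finset.sum_congr rfl fun j _ => neg_div _ _
        rw [h1, hC_def]
      have hterm : ∀ i : Fin n, Tendsto (fun x : ℝ =>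
          2 * Real.exp (-(B x - |μ i|) ^ 2 / (2 * (v i : ℝ)))
            / (∏ j, gaussianPDFReal (μ j) (v j) (x ^ ((1 : ℝ) / n) + 1)))
          atTop (𝓝 0) := by
        intro i
        have heq : ∀ x : ℝ, 2 * Real.exp (-(B x - |μ i|) ^ 2 / (2 * (v i : ℝ)))
            / (∏ j, gaussianPDFReal (μ j) (v j) (x ^ ((1 : ℝ) / n) + 1))
            = (2 / C) * Real.exp (-(B x - |μ i|) ^ 2 / (2 * (v i : ℝ)) + AA x) := by
          intro x
          rw [hDC x, Real.exp_add, Real.exp_neg]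
          field_simp [hC0.ne']
        simp only [heq]
        have hE : Tendsto (fun x : ℝ => -(B x - |μ i|) ^ 2 / (2 * (v i : ℝ)) + AA x)
            atTop atBot := by
          have hneg : Tendsto (fun x : ℝ => -((x ^ ((1 : ℝ) / n)) ^ 2)) atTop atBot :=
            tendsto_neg_atTop_atBot.comp ((tendsto_pow_atTop two_ne_zero).comp hTtend)
          refine tendsto_atBot_mono' atTop ?_ hneg
          have hev1 : ∀ᶠ x : ℝ in atTop, (1:ℝ) ≤ x ^ ((1 : ℝ) / n) :=
            hTtend.eventually_ge_atTop 1
          have hev2 : ∀ᶠ x : ℝ in atTop,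
              max (2 * |μ i|) (Real.sqrt (8 * (v i : ℝ) * (K * (2 + M) ^ 2 + 1)))
                ≤ (Real.log x) ^ ((1 : ℝ) / ((n:ℝ) - 1)) :=
            hltend.eventually_ge_atTop _
          filter_upwards [hev1, hev2] with x h1T hl
          set T : ℝ := x ^ ((1 : ℝ) / n) with hT_def
          set l : ℝ := (Real.log x) ^ ((1 : ℝ) / ((n:ℝ) - 1)) with hl_def
          have hl1 : 2 * |μ i| ≤ l := le_trans (le_max_left _ _) hl
          have hl2 : Real.sqrt (8 * (v i : ℝ) * (K * (2 + M) ^ 2 + 1)) ≤ l :=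
            le_trans (le_max_right _ _) hl
          have hl0 : 0 ≤ l := le_trans (Real.sqrt_nonneg _) hl2
          have harg : 0 ≤ 8 * (v i : ℝ) * (K * (2 + M) ^ 2 + 1) := by
            have h8 : (0:ℝ) ≤ 8 * (v i : ℝ) := by positivity
            have h9 : (0:ℝ) ≤ K * (2 + M) ^ 2 + 1 := by nlinarith [sq_nonneg (2 + M)]
            exact mul_nonneg h8 h9
          have hlsq : 8 * (v i : ℝ) * (K * (2 + M) ^ 2 + 1) ≤ l ^ 2 := by
            calc 8 * (v i : ℝ) * (K * (2 + M) ^ 2 + 1)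
                = (Real.sqrt (8 * (v i : ℝ) * (K * (2 + M) ^ 2 + 1))) ^ 2 :=
                  (Real.sq_sqrt harg).symm
              _ ≤ l ^ 2 := pow_le_pow_left₀ (Real.sqrt_nonneg _) hl2 2
          -- bound on AA
          have hAAle : AA x ≤ (2 + M) ^ 2 * T ^ 2 * K := by
            rw [hAA_def]
            simp only
            calc ∑ j, (x ^ ((1 : ℝ) / n) + 1 - μ j) ^ 2 / (2 * (v j : ℝ))
                ≤ ∑ j, ((2 + M) * T) ^ 2 / (2 * (v j : ℝ)) := by
                  refine Finset.sum_le_sum fun j _ => ?_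
                  refine div_le_div_of_nonneg_right ?_ (by positivity : (0:ℝ) ≤ 2 * (v j : ℝ))
                  have h1 : |μ j| ≤ M := hMj j
                  have h2 : -(μ j) ≤ M := (neg_le_abs _).trans h1
                  have h3 : μ j ≤ M := (le_abs_self _).trans h1
                  refine sq_le_sq' ?_ ?_
                  · nlinarith
                  · nlinarith
              _ = (2 + M) ^ 2 * T ^ 2 * K := by
                  rw [hK_def, Finset.mul_sum]
                  refine Finset.sum_congr rfl fun j _ => ?_
                  rw [mul_one_div, mul_pow]
          -- bound on the negative term
          have hBx : B x = T * l := rfl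
          have hm : |μ i| ≤ T * l / 2 := by nlinarith [abs_nonneg (μ i)]
          have hBge : T * l / 2 ≤ T * l - |μ i| := by linarith
          have h1 : (T * l / 2) ^ 2 ≤ (T * l - |μ i|) ^ 2 :=
            pow_le_pow_left₀ (by positivity) hBge 2
          have hvI := hv_pos i
          have h2 : T ^ 2 * (K * (2 + M) ^ 2 + 1) ≤ (T * l / 2) ^ 2 / (2 * (v i : ℝ)) := by
            have heq2 : (T * l / 2) ^ 2 / (2 * (v i : ℝ)) = T ^ 2 * (l ^ 2 / (8 * (v i : ℝ))) := by
              field_simp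
              ring
            rw [heq2]
            refine mul_le_mul_of_nonneg_left ?_ (sq_nonneg T)
            rw [le_div_iff₀ (by positivity)]
            nlinarith [hlsq]
          have h3 : (T * l / 2) ^ 2 / (2 * (v i : ℝ)) ≤ (T * l - |μ i|) ^ 2 / (2 * (v i : ℝ)) :=
            div_le_div_of_nonneg_right h1 (by positivity)
          rw [hBx]
          rw [neg_div]
          nlinarith [hAAle, h2, h3]
        have := (Real.tendsto_exp_atBot.comp hE).const_mul (2 / C)
        simpa using this
      have hsum := tendsto_finset_sum Finset.univ (fun i (_ : i ∈ Finset.univ) => hterm i)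
      rw [Finset.sum_const, smul_zero] at hsum
      refine hsum.congr fun x => ?_
      rw [← Finset.sum_div]
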